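/- arXiv:2003.05211 — 2 statements merged into one kernel-verified Lean document; each statement's English description precedes it below -/
import Mathlib

section
/- Let F be a (M,β,s₀)-Morse-non-degenerate 2π-periodic function with critical points θ̄₀ < θ̄₁ < … < θ̄_{2N}. Then for every 1 ≤ i ≤ 2N: (i) |F′(θ̄_i + θ)| ≥ (β/2)|θ| for all real θ with |θ| ≤ θ♯ := β s₀³/(6M); (ii) β s₀³/(6πM) ≤ 1; (iii) min over θ ∈ [θ̄_{i−1} + θ♯/2, θ̄_i − θ♯/2] of |F′(θ)| is at least β² s₀³/(32M). -/
noncomputable section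

open Complex Set

/-- The complex strip of half-width `s` (a fundamental domain of the complexified torus `𝕋_s`). -/
def Strip (s : ℝ) : Set ℂ := {z : ℂ | |z.im| < s}

open Filter


lemma strip_isOpen (s : ℝ) : IsOpen (Strip s) := by
  have : Strip s = (fun z : ℂ => |z.im|) ⁻¹' Iio s := rfl
  rw [this]
  exact (continuous_abs.comp Complex.continuous_im).isOpen_preimage _ isOpen_Iio

lemma real_mem_strip {s : ℝ} (hs : 0 < s) (x : ℝ) : (x : ℂ) ∈ Strip s := by
  simp [Strip, hs]

lemma abs_eq_abs_re {w : ℂ} (h : w.im = 0) : ‖w‖ = |w.re| := by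
  rw [Complex.norm_def, Complex.normSq_apply, h, mul_zero, add_zero, ← Real.sqrt_sq_eq_abs, sq]

lemma im_deriv_zero {G : ℂ → ℂ} {g : ℂ} {x : ℝ} (h : HasDerivAt G g (x:ℂ))
    (hre : ∀ y : ℝ, (G (y:ℂ)).im = 0) : g.im = 0 := by
  have h1 : HasDerivAt (fun z => -Complex.I * G z) (-Complex.I * g) (x:ℂ) := h.const_mul _
  have h2 := h1.real_of_complex
  have h3 : (fun y : ℝ => (-Complex.I * G (y:ℂ)).re) = fun _ => (0:ℝ) := by
    funext y; simp [Complex.mul_re, hre y]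
  rw [h3] at h2
  have h4 : (-Complex.I * g).re = 0 := h2.unique (hasDerivAt_const _ _)
  simpa [Complex.mul_re] using h4


lemma cauchy_est {f : ℂ → ℂ} {c : ℂ} {M : ℝ} (R : NNReal) (hr : 0 < (R:ℝ))
    (hf : DifferentiableOn ℂ f (Metric.closedBall c R))
    (hM : ∀ z ∈ Metric.closedBall c R, ‖f z‖ ≤ M) (n : ℕ) :
    ‖iteratedDeriv n f c‖ ≤ n.factorial * M / (R:ℝ) ^ n := by
  have hR : 0 < R := by exact_mod_cast hr
  have hb := hf.hasFPowerSeriesOnBall hR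
  have h2 := hb.factorial_smul (1:ℂ) n
  have h1 : iteratedDeriv n f c = iteratedFDeriv ℂ n f c (fun _ => 1) := by
    rw [iteratedDeriv_eq_iteratedFDeriv]
  have hM0 : 0 ≤ M := (norm_nonneg _).trans (hM c (Metric.mem_closedBall_self hr.le))
  -- norm of the coefficient
  have hcont : Continuous fun θ : ℝ => ‖f (circleMap c R θ)‖ := by
    apply Continuous.norm
    exact hf.continuousOn.comp_continuous (continuous_circleMap c R)
      (fun θ => circleMap_mem_closedBall c hr.le θ)
  have hint : (∫ θ : ℝ in (0)..2 * Real.pi, ‖f (circleMap c R θ)‖) ≤ 2 * Real.pi * M := by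
    have := intervalIntegral.integral_mono_on (a := 0) (b := 2 * Real.pi)
      Real.two_pi_pos.le (hcont.intervalIntegrable (μ := MeasureTheory.volume) _ _) intervalIntegrable_const
      (fun θ _ => hM _ (circleMap_mem_closedBall c hr.le θ))
    rw [intervalIntegral.integral_const, smul_eq_mul, sub_zero] at this
    linarith
  have hcoeff := norm_cauchyPowerSeries_le f c R n
  have happ : ‖cauchyPowerSeries f c R n (fun _ => (1:ℂ))‖ ≤ ‖cauchyPowerSeries f c R n‖ := by
    have := (cauchyPowerSeries f c R n).le_opNorm (fun _ => (1:ℂ))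
    simpa using this
  have key : ‖iteratedDeriv n f c‖ = n.factorial * ‖cauchyPowerSeries f c R n (fun _ => (1:ℂ))‖ := by
    rw [h1, ← h2]
    rw [← Nat.cast_smul_eq_nsmul ℂ, norm_smul]
    simp
  rw [key]
  have hRn : (0:ℝ) < (R:ℝ) ^ n := by positivity
  have h5 : ‖cauchyPowerSeries f c R n‖ ≤ M / (R:ℝ) ^ n := by
    refine hcoeff.trans ?_
    rw [_root_.abs_of_nonneg (R.coe_nonneg)]
    rw [div_eq_mul_inv, inv_pow]
    apply mul_le_mul_of_nonneg_right _ (by positivity)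
    calc (2 * Real.pi)⁻¹ * ∫ θ : ℝ in (0)..2 * Real.pi, ‖f (circleMap c R θ)‖
        ≤ (2 * Real.pi)⁻¹ * (2 * Real.pi * M) := by
          apply mul_le_mul_of_nonneg_left hint (by positivity)
      _ = M := by field_simp
  calc (n.factorial : ℝ) * ‖cauchyPowerSeries f c R n (fun _ => (1:ℂ))‖
      ≤ n.factorial * (M / (R:ℝ)^n) := by
        apply mul_le_mul_of_nonneg_left (happ.trans h5) (by positivity)
    _ = n.factorial * M / (R:ℝ)^n := by ring

lemma cauchy_strip {F : ℂ → ℂ} {s₀ M : ℝ} (hs : 0 < s₀)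
    (hol : DifferentiableOn ℂ F (Strip s₀)) (bdd : ∀ z ∈ Strip s₀, ‖F z‖ ≤ M)
    (x : ℝ) (n : ℕ) :
    ‖iteratedDeriv n F (x:ℂ)‖ ≤ n.factorial * M / s₀ ^ n := by
  have key : ∀ r : ℝ, 0 < r → r < s₀ →
      ‖iteratedDeriv n F (x:ℂ)‖ ≤ n.factorial * M / r ^ n := by
    intro r h0 h1
    have hsub : Metric.closedBall (x:ℂ) r ⊆ Strip s₀ := by
      intro z hz
      rw [Metric.mem_closedBall] at hz
      have h2 : |z.im| = |(z - (x:ℂ)).im| := by simp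
      have h3 : |(z - (x:ℂ)).im| ≤ ‖z - (x:ℂ)‖ := Complex.abs_im_le_norm _
      have h4 : ‖z - (x:ℂ)‖ ≤ r := by
        rw [← Complex.dist_eq]; exact hz
      show |z.im| < s₀
      rw [h2]; exact lt_of_le_of_lt (h3.trans h4) h1
    have := cauchy_est (f := F) (c := (x:ℂ)) (M := M) ⟨r, h0.le⟩ h0
      (hol.mono hsub) (fun z hz => bdd z (hsub hz)) n
    exact this
  have hten : Tendsto (fun r : ℝ => (n.factorial : ℝ) * M / r ^ n) (nhdsWithin s₀ (Iio s₀))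
      (nhds ((n.factorial : ℝ) * M / s₀ ^ n)) := by
    apply Tendsto.mono_left _ nhdsWithin_le_nhds
    exact (tendsto_const_nhds.div ((continuous_pow n).tendsto s₀) (by positivity))
  refine ge_of_tendsto hten ?_
  filter_upwards [Ioo_mem_nhdsLT_of_mem (Set.mem_Ioc.mpr ⟨hs, le_refl s₀⟩)] with r hr
  exact key r hr.1 hr.2

lemma lemA_core {g g' : ℝ → ℝ} {β K : ℝ}
    (hd : ∀ x, HasDerivAt g (g' x) x)
    (hlip : ∀ x : ℝ, |g' x - g' 0| ≤ K * |x|)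
    (h0 : g 0 = 0) (hβ0 : β ≤ g' 0) :
    ∀ θ : ℝ, 0 ≤ θ → β * θ - K * θ^2 / 2 ≤ g θ := by
  intro θ hθ
  set φ : ℝ → ℝ := fun t => g t - β * t + K/2 * t^2 with hφ
  have hdφ : ∀ t, HasDerivAt φ (g' t - β + K * t) t := by
    intro t
    have h1 : HasDerivAt (fun t:ℝ => β * t) β t := by simpa using (hasDerivAt_id t).const_mul β
    have h2 : HasDerivAt (fun t:ℝ => K/2 * t^2) (K * t) t := by
      have := (hasDerivAt_pow 2 t).const_mul (K/2)
      exact this.congr_deriv (by norm_num; ring)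
    exact ((hd t).sub h1).add h2
  have mono : MonotoneOn φ (Ici (0:ℝ)) := by
    apply monotoneOn_of_deriv_nonneg (convex_Ici 0)
    · exact fun t _ => (hdφ t).differentiableAt.continuousAt.continuousWithinAt
    · exact fun t _ => (hdφ t).differentiableAt.differentiableWithinAt
    · intro t ht
      rw [interior_Ici] at ht
      have ht' : 0 < t := ht
      rw [(hdφ t).deriv]
      have habs := hlip t
      rw [_root_.abs_of_pos ht'] at habs
      have h2 := (abs_le.mp habs).1
      linarith
  have hm := mono (self_mem_Ici) (mem_Ici.mpr hθ) hθ
  have hφ0 : φ 0 = 0 := by simp [hφ, h0]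
  rw [hφ0] at hm
  simp only [hφ] at hm
  linarith

lemma lemA' {g g' : ℝ → ℝ} {β K : ℝ} (hK : 0 < K)
    (hd : ∀ x, HasDerivAt g (g' x) x)
    (hlip : ∀ x : ℝ, |g' x - g' 0| ≤ K * |x|)
    (h0 : g 0 = 0) (hβ0 : β ≤ g' 0) :
    ∀ θ : ℝ, |θ| ≤ β / K → β / 2 * |θ| ≤ |g θ| := by
  intro θ hθ
  have hβK : K * |θ| ≤ β := by
    rw [← le_div_iff₀' hK]; exact hθ
  rcases le_or_gt 0 θ with hpos | hneg
  · have := lemA_core hd hlip h0 hβ0 θ hpos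
    have habs : |θ| = θ := _root_.abs_of_nonneg hpos
    rw [habs] at hβK ⊢
    have : β / 2 * θ ≤ g θ := by nlinarith
    exact this.trans (le_abs_self _)
  · set g₁ : ℝ → ℝ := fun t => -g (-t) with hg₁
    set g₁' : ℝ → ℝ := fun t => g' (-t) with hg₁'
    have hd₁ : ∀ x, HasDerivAt g₁ (g₁' x) x := by
      intro x
      have h := ((hd (-x)).comp x (hasDerivAt_neg x)).neg
      exact h.congr_deriv (by simp [hg₁'])
    have hlip₁ : ∀ x : ℝ, |g₁' x - g₁' 0| ≤ K * |x| := by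
      intro x
      have := hlip (-x)
      simpa [hg₁'] using this
    have h0₁ : g₁ 0 = 0 := by simp [hg₁, h0]
    have hβ0₁ : β ≤ g₁' 0 := by simpa [hg₁'] using hβ0
    have := lemA_core hd₁ hlip₁ h0₁ hβ0₁ (-θ) (by linarith)
    have habs : |θ| = -θ := _root_.abs_of_neg hneg
    rw [habs] at hβK ⊢
    have hg₁v : g₁ (-θ) = -g θ := by simp [hg₁]
    rw [hg₁v] at this
    have : β / 2 * (-θ) ≤ -g θ := by nlinarith
    exact this.trans (neg_le_abs _)

lemma lemA {g g' : ℝ → ℝ} {β K : ℝ} (hK : 0 < K)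
    (hd : ∀ x, HasDerivAt g (g' x) x)
    (hlip : ∀ x : ℝ, |g' x - g' 0| ≤ K * |x|)
    (h0 : g 0 = 0) (hβ0 : β ≤ |g' 0|) :
    ∀ θ : ℝ, |θ| ≤ β / K → β / 2 * |θ| ≤ |g θ| := by
  rcases le_or_gt 0 (g' 0) with hp | hn
  · exact lemA' hK hd hlip h0 (by rwa [_root_.abs_of_nonneg hp] at hβ0)
  · intro θ hθ
    have hd₂ : ∀ x, HasDerivAt (fun t => -g t) (-g' x) x := fun x => (hd x).neg
    have hlip₂ : ∀ x : ℝ, |(-g' x) - (-g' 0)| ≤ K * |x| := by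
      intro x
      rw [show (-g' x) - (-g' 0) = -(g' x - g' 0) by ring, abs_neg]
      exact hlip x
    have h0₂ : -g 0 = 0 := by simp [h0]
    have hβ0₂ : β ≤ -g' 0 := by rwa [_root_.abs_of_neg hn] at hβ0
    have := lemA' hK hd₂ hlip₂ h0₂ hβ0₂ θ hθ
    simpa using this
/-- Data of a `(M,β,s₀)`-Morse-non-degenerate `2π`-periodic real-analytic function, together with
its `2N` non-degenerate critical points `θ 1 < … < θ (2N) = π` in `(-π,π]` (and `θ 0 = -π`,
the translate of the global maximum `θ (2N) = π`); odd indices are minima, even indices maxima,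
and the critical values are pairwise separated by at least `β`. -/
structure MorseData (M β s₀ : ℝ) (N : ℕ) where
  F : ℂ → ℂ
  θ : ℕ → ℝ
  hol : DifferentiableOn ℂ F (Strip s₀)
  per : ∀ z : ℂ, F (z + 2 * Real.pi) = F z
  realF : ∀ x : ℝ, (F (x : ℂ)).im = 0
  bdd : ∀ z ∈ Strip s₀, ‖F z‖ ≤ M
  lower : ∀ x : ℝ, β ≤ ‖deriv F (x : ℂ)‖ + ‖iteratedDeriv 2 F (x : ℂ)‖
  mono : ∀ i j : ℕ, i < j → j ≤ 2 * N → θ i < θ j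
  first : θ 0 = -Real.pi
  last : θ (2 * N) = Real.pi
  crit : ∀ i ≤ 2 * N, deriv F ((θ i : ℝ) : ℂ) = 0
  conv : ∀ i ≤ 2 * N, i % 2 = 1 → 0 < (iteratedDeriv 2 F ((θ i : ℝ) : ℂ)).re
  conc : ∀ i ≤ 2 * N, i % 2 = 0 → (iteratedDeriv 2 F ((θ i : ℝ) : ℂ)).re < 0
  sep : ∀ i j : ℕ, 1 ≤ i → i ≤ 2 * N → 1 ≤ j → j ≤ 2 * N → i ≠ j →
    β ≤ ‖F ((θ i : ℝ) : ℂ) - F ((θ j : ℝ) : ℂ)‖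
  onlycrit : ∀ x : ℝ, -Real.pi < x → x ≤ Real.pi → deriv F ((x : ℝ) : ℂ) = 0 →
    ∃ i, i ≤ 2 * N ∧ x = θ i


variable {M β s₀ : ℝ} {N : ℕ}

lemma md_iteratedDeriv_two (F : ℂ → ℂ) : iteratedDeriv 2 F = deriv (deriv F) := by
  rw [iteratedDeriv_succ, iteratedDeriv_one]

lemma md_hasDerivAt1 (hs : 0 < s₀) (md : MorseData M β s₀ N) (x : ℝ) :
    HasDerivAt md.F (deriv md.F (x:ℂ)) (x:ℂ) :=
  (md.hol.differentiableAt ((strip_isOpen s₀).mem_nhds (real_mem_strip hs x))).hasDerivAt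

lemma md_hasDerivAt2 (hs : 0 < s₀) (md : MorseData M β s₀ N) (x : ℝ) :
    HasDerivAt (deriv md.F) (iteratedDeriv 2 md.F (x:ℂ)) (x:ℂ) := by
  have A := (md.hol.analyticOnNhd (strip_isOpen s₀)).deriv
  have h := (A (x:ℂ) (real_mem_strip hs x)).differentiableAt.hasDerivAt
  rw [md_iteratedDeriv_two]; exact h

lemma md_hasDerivAt3 (hs : 0 < s₀) (md : MorseData M β s₀ N) (x : ℝ) :
    HasDerivAt (iteratedDeriv 2 md.F) (iteratedDeriv 3 md.F (x:ℂ)) (x:ℂ) := by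
  have A2 : AnalyticOnNhd ℂ (iteratedDeriv 2 md.F) (Strip s₀) := by
    rw [md_iteratedDeriv_two]
    exact (md.hol.analyticOnNhd (strip_isOpen s₀)).deriv.deriv
  have h := (A2 (x:ℂ) (real_mem_strip hs x)).differentiableAt.hasDerivAt
  rw [show iteratedDeriv 3 md.F = deriv (iteratedDeriv 2 md.F) from iteratedDeriv_succ]
  exact h

lemma md_im1 (hs : 0 < s₀) (md : MorseData M β s₀ N) (x : ℝ) :
    (deriv md.F (x:ℂ)).im = 0 :=
  im_deriv_zero (md_hasDerivAt1 hs md x) md.realF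

lemma md_im2 (hs : 0 < s₀) (md : MorseData M β s₀ N) (x : ℝ) :
    (iteratedDeriv 2 md.F (x:ℂ)).im = 0 :=
  im_deriv_zero (md_hasDerivAt2 hs md x) (fun y => md_im1 hs md y)

lemma stmt_part1 (hM : 0 < M) (hβ : 0 < β) (hs : 0 < s₀)
    (md : MorseData M β s₀ N) :
    ∀ i : ℕ, 1 ≤ i → i ≤ 2 * N → ∀ t : ℝ, |t| ≤ β * s₀ ^ 3 / (6 * M) →
      β / 2 * |t| ≤ ‖deriv md.F ((md.θ i + t : ℝ) : ℂ)‖ := by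
  intro i hi1 hi2 t ht
  set a := md.θ i with ha
  set K : ℝ := 6 * M / s₀ ^ 3 with hKdef
  have hK : 0 < K := by positivity
  have hβK : β / K = β * s₀ ^ 3 / (6 * M) := by
    rw [hKdef, div_div_eq_mul_div]
  set g : ℝ → ℝ := fun u => (deriv md.F ((a + u : ℝ) : ℂ)).re with hg
  set g' : ℝ → ℝ := fun u => (iteratedDeriv 2 md.F ((a + u : ℝ) : ℂ)).re with hg'
  have hd : ∀ u, HasDerivAt g (g' u) u := fun u =>
    HasDerivAt.comp_const_add a u (md_hasDerivAt2 hs md (a+u)).real_of_complex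
  have hd' : ∀ u, HasDerivAt g' ((iteratedDeriv 3 md.F ((a + u : ℝ):ℂ)).re) u := fun u =>
    HasDerivAt.comp_const_add a u (md_hasDerivAt3 hs md (a+u)).real_of_complex
  have hbound : ∀ u:ℝ, ‖(iteratedDeriv 3 md.F ((a + u :ℝ):ℂ)).re‖ ≤ K := by
    intro u
    have h := cauchy_strip hs md.hol md.bdd (a+u) 3
    have hfac : ((3:ℕ).factorial : ℝ) = 6 := by norm_num [Nat.factorial]
    rw [hfac] at h
    calc ‖(iteratedDeriv 3 md.F ((a + u :ℝ):ℂ)).re‖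
        ≤ ‖iteratedDeriv 3 md.F ((a + u :ℝ):ℂ)‖ := Complex.abs_re_le_norm _
      _ ≤ K := by rw [hKdef]; exact h
  have hlip : ∀ u : ℝ, |g' u - g' 0| ≤ K * |u| := by
    intro u
    have := Convex.norm_image_sub_le_of_norm_hasDerivWithin_le
      (f := g') (f' := fun u => (iteratedDeriv 3 md.F ((a + u : ℝ):ℂ)).re) (s := univ)
      (fun y _ => (hd' y).hasDerivWithinAt) (fun y _ => hbound y) convex_univ
      (mem_univ 0) (mem_univ u)
    simpa [Real.norm_eq_abs] using this
  have h0 : g 0 = 0 := by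
    have := md.crit i hi2
    simp only [hg]
    rw [show ((a + 0 : ℝ):ℂ) = ((a:ℝ):ℂ) by norm_num]
    rw [ha, this, Complex.zero_re]
  have hβ0 : β ≤ |g' 0| := by
    have hl := md.lower a
    have hc : ‖deriv md.F ((a:ℝ):ℂ)‖ = 0 := by rw [ha, md.crit i hi2, norm_zero]
    rw [hc, zero_add] at hl
    have : ‖iteratedDeriv 2 md.F ((a:ℝ):ℂ)‖ = |g' 0| := by
      rw [abs_eq_abs_re (md_im2 hs md a)]
      simp only [hg']
      norm_num
    rwa [this] at hl
  have := lemA hK hd hlip h0 hβ0 t (by rw [hβK]; exact ht)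
  rwa [abs_eq_abs_re (md_im1 hs md (a+t))] 

lemma stmt_part2 (hM : 0 < M) (hβ : 0 < β) (hs : 0 < s₀) (hN : 0 < N)
    (md : MorseData M β s₀ N) :
    β * s₀ ^ 3 / (6 * Real.pi * M) ≤ 1 := by
  by_contra hcon
  push_neg at hcon
  have hπ : 0 < Real.pi := Real.pi_pos
  have hts : Real.pi < β * s₀ ^ 3 / (6 * M) := by
    rw [lt_div_iff₀ (by positivity)] at hcon ⊢
    linarith
  obtain ⟨k, hk, hgap⟩ : ∃ k, k < 2 * N ∧ md.θ (k+1) - md.θ k ≤ Real.pi := by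
    by_contra hno
    push_neg at hno
    have tele : ∑ k ∈ Finset.range (2*N), (md.θ (k+1) - md.θ k) = md.θ (2*N) - md.θ 0 :=
      Finset.sum_range_sub (fun k => md.θ k) (2*N)
    have hlt : ((2*N : ℕ) : ℝ) * Real.pi < ∑ k ∈ Finset.range (2*N), (md.θ (k+1) - md.θ k) := by
      have := Finset.sum_lt_sum_of_nonempty (s := Finset.range (2*N))
        ⟨0, Finset.mem_range.mpr (by omega)⟩ (f := fun _ => Real.pi)
        (g := fun k => md.θ (k+1) - md.θ k)
        (fun j hj => hno j (Finset.mem_range.mp hj))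
      simpa [Finset.sum_const, Finset.card_range, nsmul_eq_mul] using this
    rw [tele, md.last, md.first] at hlt
    have hN1 : (1:ℝ) ≤ (N:ℝ) := by exact_mod_cast hN
    push_cast at hlt
    nlinarith
  have h0 : deriv md.F ((md.θ k : ℝ):ℂ) = 0 := md.crit k (by omega)
  have hmono := md.mono k (k+1) (by omega) (by omega)
  have habs : |md.θ k - md.θ (k+1)| = md.θ (k+1) - md.θ k := by
    rw [abs_sub_comm, _root_.abs_of_pos (by linarith)]
  have ht : |md.θ k - md.θ (k+1)| ≤ β * s₀ ^ 3 / (6 * M) := by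
    rw [habs]; linarith
  have hb := stmt_part1 hM hβ hs md (k+1) (by omega) (by omega) (md.θ k - md.θ (k+1)) ht
  rw [show md.θ (k+1) + (md.θ k - md.θ (k+1)) = md.θ k by ring, h0, norm_zero] at hb
  rw [habs] at hb
  nlinarith

lemma stmt_part3 (hM : 0 < M) (hβ : 0 < β) (hs : 0 < s₀) (hN : 0 < N)
    (md : MorseData M β s₀ N) :
    ∀ i : ℕ, 1 ≤ i → i ≤ 2 * N →
      ∀ x ∈ Set.Icc (md.θ (i - 1) + β * s₀ ^ 3 / (6 * M) / 2)
        (md.θ i - β * s₀ ^ 3 / (6 * M) / 2),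
        β ^ 2 * s₀ ^ 3 / (32 * M) ≤ ‖deriv md.F ((x : ℝ) : ℂ)‖ := by
  intro i hi1 hi2 x hx
  set T : ℝ := β * s₀ ^ 3 / (6 * M) with hT
  have hT0 : 0 < T := by rw [hT]; positivity
  set a := md.θ (i-1) with ha
  set b := md.θ i with hb'
  have hab : a < b := md.mono (i-1) i (by omega) hi2
  have A : AnalyticOnNhd ℂ (deriv md.F) (Strip s₀) :=
    (md.hol.analyticOnNhd (strip_isOpen s₀)).deriv
  have contg : Continuous fun y : ℝ => ‖deriv md.F (y:ℂ)‖ := by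
    rw [continuous_iff_continuousAt]; intro y
    exact continuous_norm.continuousAt.comp
      (((A (y:ℂ) (real_mem_strip hs y)).differentiableAt.continuousAt).comp
        Complex.continuous_ofReal.continuousAt)
  obtain ⟨x₀, hx₀mem, hx₀min⟩ := (isCompact_Icc (a := a + T/2) (b := b - T/2)).exists_isMinOn
    ⟨x, hx⟩ contg.continuousOn
  have hxge : ‖deriv md.F ((x₀:ℝ):ℂ)‖ ≤ ‖deriv md.F ((x:ℝ):ℂ)‖ :=
    isMinOn_iff.mp hx₀min x hx
  suffices h : β ^ 2 * s₀ ^ 3 / (32 * M) ≤ ‖deriv md.F ((x₀:ℝ):ℂ)‖ from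
    h.trans hxge
  have hconst : β / 2 * (T / 2) = β ^ 2 * s₀ ^ 3 / (24 * M) := by
    rw [hT]; field_simp; ring
  have hc2 : β ^ 2 * s₀ ^ 3 / (32 * M) ≤ β ^ 2 * s₀ ^ 3 / (24 * M) := by
    apply div_le_div_of_nonneg_left (by positivity) (by positivity) (by linarith)
  have hm1 : a + T/2 ≤ x₀ := hx₀mem.1
  have hm2 : x₀ ≤ b - T/2 := hx₀mem.2
  by_cases hA : x₀ ≤ a + T
  · -- close to the left critical point
    rcases eq_or_lt_of_le hi1 with hi1' | hi1'
    · -- i = 1 : use periodicity and the point θ (2N)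
      have hieq : (1:ℕ) = i := hi1'
      have ha' : a = -Real.pi := by rw [ha, ← hieq]; exact md.first
      set t := x₀ - a with htdef
      have ht1 : T/2 ≤ t := by rw [htdef]; linarith
      have ht2 : t ≤ T := by rw [htdef]; linarith
      have htpos : 0 < t := lt_of_lt_of_le (by positivity) ht1
      have hper : deriv md.F ((md.θ (2*N) + t : ℝ) : ℂ) = deriv md.F ((x₀:ℝ):ℂ) := by
        have hfun : (fun z => md.F (z + 2*(Real.pi:ℂ))) = md.F := by
          funext z; exact_mod_cast md.per z
        have hcast : ((md.θ (2*N) + t : ℝ) : ℂ) = ((x₀:ℝ):ℂ) + 2*(Real.pi:ℂ) := by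
          rw [md.last, htdef, ha']; push_cast; ring
        rw [hcast]
        calc deriv md.F (((x₀:ℝ):ℂ) + 2*(Real.pi:ℂ))
            = deriv (fun z => md.F (z + 2*(Real.pi:ℂ))) ((x₀:ℝ):ℂ) :=
              (deriv_comp_add_const _ _ _).symm
          _ = deriv md.F ((x₀:ℝ):ℂ) := by rw [hfun]
      have habs : |t| = t := _root_.abs_of_pos htpos
      have hbnd := stmt_part1 hM hβ hs md (2*N) (by omega) (le_refl _) t
        (by rw [habs, ← hT]; exact ht2)
      rw [hper, habs] at hbnd
      calc β ^ 2 * s₀ ^ 3 / (32 * M) ≤ β ^ 2 * s₀ ^ 3 / (24 * M) := hc2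
        _ = β / 2 * (T / 2) := hconst.symm
        _ ≤ β / 2 * t := by apply mul_le_mul_of_nonneg_left (by linarith) (by positivity)
        _ ≤ _ := hbnd
    · -- 2 ≤ i : use the critical point θ (i-1)
      set t := x₀ - a with htdef
      have ht1 : T/2 ≤ t := by rw [htdef]; linarith
      have ht2 : t ≤ T := by rw [htdef]; linarith
      have htpos : 0 < t := lt_of_lt_of_le (by positivity) ht1
      have habs : |t| = t := _root_.abs_of_pos htpos
      have hbnd := stmt_part1 hM hβ hs md (i-1) (by omega) (by omega) t
        (by rw [habs, ← hT]; exact ht2)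
      rw [show md.θ (i-1) + t = x₀ by rw [htdef, ← ha]; ring, habs] at hbnd
      calc β ^ 2 * s₀ ^ 3 / (32 * M) ≤ β ^ 2 * s₀ ^ 3 / (24 * M) := hc2
        _ = β / 2 * (T / 2) := hconst.symm
        _ ≤ β / 2 * t := by apply mul_le_mul_of_nonneg_left (by linarith) (by positivity)
        _ ≤ _ := hbnd
  by_cases hB : b - T ≤ x₀
  · -- close to the right critical point
    set t := x₀ - b with htdef
    have ht1 : t ≤ -(T/2) := by rw [htdef]; linarith
    have ht2 : -T ≤ t := by rw [htdef]; linarith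
    have htneg : t < 0 := lt_of_le_of_lt ht1 (by linarith)
    have habs : |t| = -t := _root_.abs_of_neg htneg
    have hbnd := stmt_part1 hM hβ hs md i hi1 hi2 t
      (by rw [habs, ← hT]; linarith)
    rw [show md.θ i + t = x₀ by rw [htdef, ← hb']; ring, habs] at hbnd
    calc β ^ 2 * s₀ ^ 3 / (32 * M) ≤ β ^ 2 * s₀ ^ 3 / (24 * M) := hc2
      _ = β / 2 * (T / 2) := hconst.symm
      _ ≤ β / 2 * (-t) := by apply mul_le_mul_of_nonneg_left (by linarith) (by positivity)
      _ ≤ _ := hbnd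
  · -- interior case
    push_neg at hA hB
    have hnhds : Set.Icc (a + T/2) (b - T/2) ∈ nhds x₀ :=
      Icc_mem_nhds (by linarith) (by linarith)
    set g : ℝ → ℝ := fun y => (deriv md.F (y:ℂ)).re with hgdef
    have him : ∀ y : ℝ, (deriv md.F (y:ℂ)).im = 0 := md_im1 hs md
    have habsg : ∀ y : ℝ, ‖deriv md.F (y:ℂ)‖ = |g y| := fun y =>
      abs_eq_abs_re (him y)
    have hdg : ∀ y : ℝ, HasDerivAt g ((iteratedDeriv 2 md.F (y:ℂ)).re) y := fun y =>
      (md_hasDerivAt2 hs md y).real_of_complex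
    have hg0 : g x₀ ≠ 0 := by
      intro hgz
      have hz : deriv md.F ((x₀:ℝ):ℂ) = 0 := by
        have : ‖deriv md.F ((x₀:ℝ):ℂ)‖ = 0 := by
          rw [habsg x₀, hgz, abs_zero]
        exact norm_eq_zero.mp this
      have h0le : md.θ 0 ≤ a := by
        rw [ha]
        rcases Nat.eq_zero_or_pos (i-1) with h | h
        · rw [h]
        · exact le_of_lt (md.mono 0 (i-1) h (by omega))
      have hble : b ≤ md.θ (2*N) := by
        rw [hb']
        rcases eq_or_lt_of_le hi2 with h | h
        · rw [h]
        · exact le_of_lt (md.mono i (2*N) h (le_refl _))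
      rw [md.first] at h0le
      rw [md.last] at hble
      obtain ⟨j, hj2N, hjeq⟩ := md.onlycrit x₀ (by linarith) (by linarith) hz
      rcases le_or_gt j (i-1) with hji | hji
      · have : md.θ j ≤ a := by
          rw [ha]
          rcases eq_or_lt_of_le hji with h | h
          · rw [h]
          · exact le_of_lt (md.mono j (i-1) h (by omega))
        rw [← hjeq] at this
        linarith
      · have : b ≤ md.θ j := by
          rw [hb']
          have hij : i ≤ j := by omega
          rcases eq_or_lt_of_le hij with h | h
          · rw [h]
          · exact le_of_lt (md.mono i j h hj2N)
        rw [← hjeq] at this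
        linarith
    have hcontg : ContinuousAt g x₀ := (hdg x₀).differentiableAt.continuousAt
    have hminloc : ∀ᶠ y in nhds x₀, |g x₀| ≤ |g y| := by
      filter_upwards [hnhds] with y hy
      have := isMinOn_iff.mp hx₀min y hy
      rwa [habsg, habsg] at this
    have hd2zero : (iteratedDeriv 2 md.F ((x₀:ℝ):ℂ)).re = 0 := by
      rcases hg0.lt_or_gt with hneg | hpos
      · have hev : ∀ᶠ y in nhds x₀, g y ≤ g x₀ := by
          filter_upwards [hminloc, hcontg.eventually (eventually_lt_nhds hneg)] with y h1 h2
          rw [_root_.abs_of_neg hneg, _root_.abs_of_neg h2] at h1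
          linarith
        exact IsLocalMax.hasDerivAt_eq_zero hev (hdg x₀)
      · have hev : ∀ᶠ y in nhds x₀, g x₀ ≤ g y := by
          filter_upwards [hminloc, hcontg.eventually (eventually_gt_nhds hpos)] with y h1 h2
          rw [_root_.abs_of_pos hpos, _root_.abs_of_pos h2] at h1
          linarith
        exact IsLocalMin.hasDerivAt_eq_zero hev (hdg x₀)
    have habs2 : ‖iteratedDeriv 2 md.F ((x₀:ℝ):ℂ)‖ = 0 := by
      rw [abs_eq_abs_re (md_im2 hs md x₀), hd2zero, abs_zero]
    have hβle := md.lower x₀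
    rw [habs2, add_zero] at hβle
    have hp2 := stmt_part2 hM hβ hs hN md
    have hfin : β ^ 2 * s₀ ^ 3 / (32 * M) ≤ β := by
      rw [div_le_iff₀ (by positivity)]
      have h6 : β * s₀ ^ 3 ≤ 6 * Real.pi * M := by
        rw [div_le_one (by positivity)] at hp2
        exact hp2
      have hpm : (0:ℝ) ≤ (32 - 6 * Real.pi) * M :=
        mul_nonneg (by nlinarith [Real.pi_lt_d2]) hM.le
      calc β ^ 2 * s₀ ^ 3 = β * (β * s₀ ^ 3) := by ring
        _ ≤ β * (6 * Real.pi * M) := mul_le_mul_of_nonneg_left h6 hβ.le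
        _ ≤ β * (32 * M) := mul_le_mul_of_nonneg_left (by linarith) hβ.le
    exact hfin.trans hβle

/-- Lemma `parcoavventura`: quantitative behavior of `F'` near and away from
the critical points of a `(M,β,s₀)`-Morse-non-degenerate potential. -/
theorem statement_2 (M β s₀ : ℝ) (N : ℕ)
    (hM : 0 < M) (hβ : 0 < β) (hs : 0 < s₀) (hN : 0 < N)
    (md : MorseData M β s₀ N) :
    (∀ i : ℕ, 1 ≤ i → i ≤ 2 * N → ∀ θ : ℝ, |θ| ≤ β * s₀ ^ 3 / (6 * M) →
      β / 2 * |θ| ≤ ‖deriv md.F ((md.θ i + θ : ℝ) : ℂ)‖) ∧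
    β * s₀ ^ 3 / (6 * Real.pi * M) ≤ 1 ∧
    (∀ i : ℕ, 1 ≤ i → i ≤ 2 * N →
      ∀ x ∈ Set.Icc (md.θ (i - 1) + β * s₀ ^ 3 / (6 * M) / 2)
        (md.θ i - β * s₀ ^ 3 / (6 * M) / 2),
        β ^ 2 * s₀ ^ 3 / (32 * M) ≤ ‖deriv md.F ((x : ℝ) : ℂ)‖) := by
  exact ⟨stmt_part1 hM hβ hs md, stmt_part2 hM hβ hs hN md, stmt_part3 hM hβ hs hN md⟩
end
end

section
/- Let R, r > 0 and let g(z) be holomorphic on the complex r-neighborhood [0,R]_r of the real interval [0,R]. If g is even near 0 (i.e. g(z) = g(−z) for all z in a neighborhood of 0), then there exists a function G(v), holomorphic on the complex r²-neighborhood [0,R²]_{r²} of [0,R²], such that G(z²) = g(z) for all z ∈ [0,R]_r. -/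
noncomputable section

open Complex Set

/-- Complex `ρ`-neighborhood of the closed real interval `[a,b]`. -/
def IccNbhd (a b ρ : ℝ) : Set ℂ :=
  {z : ℂ | ∃ y : ℝ, y ∈ Set.Icc a b ∧ ‖z - (y : ℂ)‖ < ρ}

lemma isOpen_iccNbhd (a b ρ : ℝ) : IsOpen (IccNbhd a b ρ) := by
  have : IccNbhd a b ρ = ⋃ y ∈ Set.Icc a b, Metric.ball (y : ℂ) ρ := by
    ext z; simp [IccNbhd, Metric.mem_ball, Complex.dist_eq]
  rw [this]
  exact isOpen_biUnion fun y _ => Metric.isOpen_ball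

lemma sq_cpow_half (w : ℂ) : (w ^ (2⁻¹ : ℂ)) ^ 2 = w := by
  rcases eq_or_ne w 0 with rfl | hw
  · rw [Complex.zero_cpow (by norm_num)]; simp
  · rw [sq, ← Complex.cpow_add _ _ hw, show (2⁻¹ : ℂ) + 2⁻¹ = 1 by norm_num,
      Complex.cpow_one]

lemma abs_sq_cpow_half (w : ℂ) : (‖w ^ (2⁻¹ : ℂ)‖) ^ 2 = ‖w‖ := by
  rw [← norm_pow, sq_cpow_half]

/-- Lemma `geronimo`: an even holomorphic function `g` on the complex
`r`-neighborhood of `[0,R]` is of the form `g(z) = G(z²)` for a holomorphic function `G`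
on the complex `r²`-neighborhood of `[0,R²]`. -/
theorem statement_12 (R r : ℝ) (hR : 0 < R) (hr : 0 < r) (g : ℂ → ℂ)
    (hg : DifferentiableOn ℂ g (IccNbhd 0 R r))
    (heven : ∃ ε > 0, ∀ z : ℂ, ‖z‖ < ε → g z = g (-z)) :
    ∃ G : ℂ → ℂ,
      DifferentiableOn ℂ G (IccNbhd 0 (R ^ 2) (r ^ 2)) ∧
      ∀ z ∈ IccNbhd 0 R r, G (z ^ 2) = g z := by
  obtain ⟨ε, hε, he⟩ := heven
  have hD1open := isOpen_iccNbhd 0 R r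
  have hD2open := isOpen_iccNbhd 0 (R ^ 2) (r ^ 2)
  -- small elements are in the neighborhoods
  have hball : ∀ z : ℂ, ‖z‖ < r → z ∈ IccNbhd 0 R r := fun z hz =>
    ⟨0, ⟨le_refl 0, hR.le⟩, by simpa using hz⟩
  have hball2 : ∀ w : ℂ, ‖w‖ < r ^ 2 → w ∈ IccNbhd 0 (R ^ 2) (r ^ 2) := fun w hw =>
    ⟨0, ⟨le_refl 0, (sq_nonneg R).trans (le_refl _)⟩, by simpa using hw⟩
  -- evenness extends to the ball of radius r
  have hballsub : Metric.ball (0 : ℂ) r ⊆ IccNbhd 0 R r := fun z hz =>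
    hball z (by simpa [Complex.dist_eq] using hz)
  have heven' : ∀ z : ℂ, ‖z‖ < r → g z = g (-z) := by
    have h1 : AnalyticOnNhd ℂ g (Metric.ball (0 : ℂ) r) :=
      (hg.mono hballsub).analyticOnNhd Metric.isOpen_ball
    have h2 : AnalyticOnNhd ℂ (fun z => g (-z)) (Metric.ball (0 : ℂ) r) := by
      have : DifferentiableOn ℂ (fun z => g (-z)) (Metric.ball (0 : ℂ) r) := by
        apply DifferentiableOn.comp (hg.mono hballsub)
          (differentiable_neg.differentiableOn)
        intro z hz
        simpa [Metric.mem_ball] using hz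
      exact this.analyticOnNhd Metric.isOpen_ball
    have hev : g =ᶠ[nhds (0 : ℂ)] fun z => g (-z) := by
      filter_upwards [Metric.ball_mem_nhds (0 : ℂ) hε] with z hz
      exact he z (by simpa [Complex.dist_eq] using hz)
    have := h1.eqOn_of_preconnected_of_eventuallyEq h2
      (convex_ball (0 : ℂ) r).isPreconnected (by simpa [Metric.mem_ball] using hr) hev
    intro z hz
    exact this (by simpa [Metric.mem_ball, Complex.dist_eq] using hz)
  -- key: g is constant on square roots, for small inputs
  have hkey : ∀ s t : ℂ, s ^ 2 = t ^ 2 → ‖s‖ < r → g s = g t := by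
    intro s t hst hs
    have h0 : (s - t) * (s + t) = 0 := by linear_combination hst
    rcases mul_eq_zero.mp h0 with h | h
    · rw [sub_eq_zero.mp h]
    · have ht : t = -s := by linear_combination h
      rw [ht]
      exact heven' s hs
  -- the square root maps D2 into D1
  have hmem : ∀ w ∈ IccNbhd 0 (R ^ 2) (r ^ 2), (w ^ (2⁻¹ : ℂ)) ∈ IccNbhd 0 R r := by
    rintro w ⟨u, ⟨hu0, huR⟩, hwu⟩
    set s := w ^ (2⁻¹ : ℂ) with hs
    have hs2 : s ^ 2 = w := sq_cpow_half w
    have hsre : 0 ≤ s.re := by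
      rw [hs, Complex.cpow_inv_two_re]; exact Real.sqrt_nonneg _
    set c : ℝ := Real.sqrt u with hc
    have hc0 : (0 : ℝ) ≤ c := Real.sqrt_nonneg _
    have hcsq : (c : ℂ) ^ 2 = (u : ℂ) := by
      have : c ^ 2 = u := Real.sq_sqrt hu0
      push_cast [← this]; ring
    refine ⟨c, ⟨hc0, ?_⟩, ?_⟩
    · calc c ≤ Real.sqrt (R ^ 2) := Real.sqrt_le_sqrt huR
        _ = R := Real.sqrt_sq hR.le
    · have hfac : (s - c) * (s + c) = w - u := by
        linear_combination hs2 - hcsq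
      have e1 : (‖s + c‖) ^ 2 = (s.re + c) ^ 2 + s.im ^ 2 := by
        rw [Complex.sq_norm, Complex.normSq_apply]
        simp [Complex.add_re, Complex.add_im]
        ring
      have e2 : (‖s - c‖) ^ 2 = (s.re - c) ^ 2 + s.im ^ 2 := by
        rw [Complex.sq_norm, Complex.normSq_apply]
        simp [Complex.sub_re, Complex.sub_im]
        ring
      have h1 : ‖s - c‖ ≤ ‖s + c‖ := by
        nlinarith [norm_nonneg (s - c), norm_nonneg (s + c), e1, e2, hsre, hc0]
      have h2 : (‖s - c‖) ^ 2 ≤ ‖w - u‖ := by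
        calc (‖s - c‖) ^ 2 = ‖s - c‖ * ‖s - c‖ := sq _
          _ ≤ ‖s - c‖ * ‖s + c‖ :=
            mul_le_mul_of_nonneg_left h1 (norm_nonneg _)
          _ = ‖(s - c) * (s + c)‖ := (norm_mul _ _).symm
          _ = ‖w - u‖ := by rw [hfac]
      nlinarith [norm_nonneg (s - c), hwu, h2]
  -- small w gives small sqrt
  have hsmall : ∀ w : ℂ, ‖w‖ < r ^ 2 → ‖w ^ (2⁻¹ : ℂ)‖ < r := by
    intro w hw
    nlinarith [abs_sq_cpow_half w, norm_nonneg (w ^ (2⁻¹ : ℂ)), norm_nonneg w]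
  set G : ℂ → ℂ := fun w => g (w ^ (2⁻¹ : ℂ)) with hGdef
  set H : ℂ → ℂ := fun w => g (Complex.I * (-w) ^ (2⁻¹ : ℂ)) with hHdef
  have hGH : ∀ w : ℂ, ‖w‖ < r ^ 2 → G w = H w := by
    intro w hw
    apply hkey
    · rw [sq_cpow_half, mul_pow, Complex.I_sq, sq_cpow_half]; ring
    · exact hsmall w hw
  -- H is differentiable where -w is in the slit plane and w is small
  have hHdiff : ∀ w : ℂ, ‖w‖ < r ^ 2 → -w ∈ Complex.slitPlane →
      DifferentiableAt ℂ H w := by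
    intro w hw hslit
    have hinner : DifferentiableAt ℂ (fun w : ℂ => Complex.I * (-w) ^ (2⁻¹ : ℂ)) w := by
      exact ((differentiableAt_id.neg).cpow (differentiableAt_const _) hslit).const_mul _
    have hpt : Complex.I * (-w) ^ (2⁻¹ : ℂ) ∈ IccNbhd 0 R r := by
      apply hball
      rw [norm_mul, Complex.norm_I, one_mul]
      exact hsmall (-w) (by rwa [norm_neg])
    exact (hg.differentiableAt (hD1open.mem_nhds hpt)).comp w hinner
  -- G is differentiable away from 0
  have hGdiff' : ∀ w : ℂ, w ≠ 0 → w ∈ IccNbhd 0 (R ^ 2) (r ^ 2) → DifferentiableAt ℂ G w := by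
    intro w hw0 hw
    by_cases hslit : w ∈ Complex.slitPlane
    · have hinner : DifferentiableAt ℂ (fun w : ℂ => w ^ (2⁻¹ : ℂ)) w :=
        differentiableAt_id.cpow (differentiableAt_const _) hslit
      exact (hg.differentiableAt (hD1open.mem_nhds (hmem w hw))).comp w hinner
    · -- w on the closed negative real axis, w ≠ 0
      have hax : w.re ≤ 0 ∧ w.im = 0 := by
        rw [Complex.mem_slitPlane_iff, not_or] at hslit
        exact ⟨not_lt.mp hslit.1, not_ne_iff.mp hslit.2⟩
      have hre : w.re < 0 := by
        rcases lt_or_eq_of_le hax.1 with h | h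
        · exact h
        · exact absurd (Complex.ext (by simpa using h) (by simpa using hax.2)) hw0
      have hnegslit : -w ∈ Complex.slitPlane := by
        rw [Complex.mem_slitPlane_iff]
        left
        simpa using hre
      -- |w| < r^2 since w is on the negative side
      obtain ⟨u, ⟨hu0, _⟩, hwu⟩ := hw
      have habs : ‖w‖ < r ^ 2 := by
        have e1 : (‖w - u‖) ^ 2 = (w.re - u) ^ 2 + w.im ^ 2 := by
          rw [Complex.sq_norm, Complex.normSq_apply]
          simp
          ring
        have e2 : (‖w‖) ^ 2 = w.re ^ 2 + w.im ^ 2 := by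
          rw [Complex.sq_norm, Complex.normSq_apply]
          ring
        nlinarith [norm_nonneg w, norm_nonneg (w - u), hwu,
          mul_nonneg hu0 (neg_nonneg.mpr hax.1)]
      have heq : G =ᶠ[nhds w] H := by
        filter_upwards [(isOpen_lt continuous_norm continuous_const).mem_nhds habs]
          with w' hw'
        exact hGH w' hw'
      exact ((hHdiff w habs hnegslit).congr_of_eventuallyEq heq)
  -- G is differentiable at 0 by removable singularity
  have hGdiff0 : DifferentiableAt ℂ G 0 := by
    have hb : Metric.ball (0 : ℂ) (r ^ 2) ∈ nhds (0 : ℂ) :=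
      Metric.ball_mem_nhds _ (by positivity)
    have hopen : DifferentiableOn ℂ G (Metric.ball (0 : ℂ) (r ^ 2) \ {0}) := by
      rintro w ⟨hwb, hw0⟩
      have : ‖w‖ < r ^ 2 := by simpa [Complex.dist_eq] using hwb
      exact (hGdiff' w (by simpa using hw0) (hball2 w this)).differentiableWithinAt
    have hcont : ContinuousAt G 0 := by
      have h1 : ContinuousAt (fun w : ℂ => w ^ (2⁻¹ : ℂ)) 0 :=
        Complex.continuousAt_cpow_const_of_re_pos (Or.inl (by simp)) (by norm_num)
      have h0 : (0 : ℂ) ^ (2⁻¹ : ℂ) = 0 := Complex.zero_cpow (by norm_num)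
      have h2 : ContinuousAt g ((0 : ℂ) ^ (2⁻¹ : ℂ)) := by
        rw [h0]
        exact (hg.differentiableAt (hD1open.mem_nhds (hball 0 (by simpa using hr)))).continuousAt
      exact ContinuousAt.comp (f := fun w : ℂ => w ^ (2⁻¹ : ℂ)) h2 h1
    have := (Complex.differentiableOn_compl_singleton_and_continuousAt_iff hb).mp
      ⟨hopen, hcont⟩
    exact this.differentiableAt hb
  refine ⟨G, ?_, ?_⟩
  · intro w hw
    rcases eq_or_ne w 0 with rfl | hw0
    · exact hGdiff0.differentiableWithinAt
    · exact (hGdiff' w hw0 hw).differentiableWithinAt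
  · intro z hz
    set s : ℂ := (z ^ 2) ^ (2⁻¹ : ℂ) with hsdef
    have hs2 : s ^ 2 = z ^ 2 := sq_cpow_half _
    have h0 : (s - z) * (s + z) = 0 := by linear_combination hs2
    have hGz : G (z ^ 2) = g s := rfl
    rcases mul_eq_zero.mp h0 with h | h
    · rw [hGz, sub_eq_zero.mp h]
    · have hsz : s = -z := by linear_combination h
      have hsre : 0 ≤ s.re := by
        rw [hsdef, Complex.cpow_inv_two_re]; exact Real.sqrt_nonneg _
      have hzre : z.re ≤ 0 := by
        have : s.re = -z.re := by rw [hsz]; simp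
        linarith [this ▸ hsre]
      obtain ⟨u, ⟨hu0, _⟩, hzu⟩ := hz
      have habs : ‖z‖ < r := by
        have e1 : (‖z - u‖) ^ 2 = (z.re - u) ^ 2 + z.im ^ 2 := by
          rw [Complex.sq_norm, Complex.normSq_apply]
          simp
          ring
        have e2 : (‖z‖) ^ 2 = z.re ^ 2 + z.im ^ 2 := by
          rw [Complex.sq_norm, Complex.normSq_apply]
          ring
        nlinarith [norm_nonneg z, norm_nonneg (z - u), hzu,
          mul_nonneg hu0 (neg_nonneg.mpr hzre)]
      rw [hGz, hsz]
      exact (heven' z habs).symm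
end
end
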